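/- Let û₀ ∈ H^1(0, π) be real. Then ∫₀^π (û₀')² dy ≥ 2 ∫₀^π û₀² dy − (1/π³)(2π ∫₀^π û₀ dy)² − ((π²−3)/(12π³))(2π(û₀(0) − û₀(π)))². -/

import Mathlib

open MeasureTheory Real Set intervalIntegral AddCircle

local instance : Fact ((0:ℝ) < Real.pi) := ⟨Real.pi_pos⟩

lemma fourierCoeffOn_congr {a b b' : ℝ} (h : b = b') (hab : a < b) (hab' : a < b')
    (f : ℝ → ℂ) (n : ℤ) : fourierCoeffOn hab f n = fourierCoeffOn hab' f n := by
  subst h; rfl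

-- Parseval for a continuous function on [0, π] (no periodicity needed)
lemma parseval_pi (f : ℝ → ℂ) (hc : Continuous f) :
    HasSum (fun n : ℤ => ‖fourierCoeffOn Real.pi_pos f n‖ ^ 2)
      ((1 / Real.pi) * ∫ x in (0:ℝ)..Real.pi, ‖f x‖ ^ 2) := by
  set T := Real.pi
  set F : AddCircle T → ℂ := liftIco T 0 f with hF
  have hFeq : F = fun x => f ((equivIco T 0 x : ℝ)) := rfl
  have hFmeas : Measurable F := by
    rw [hFeq]
    exact (hc.comp continuous_subtype_val).measurable.comp
      (measurableEquivIco T 0).measurable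
  obtain ⟨C, hC⟩ := (isCompact_Icc.image_of_continuousOn hc.continuousOn).isBounded.exists_norm_le
    (s := f '' Icc 0 T)
  have hbd : ∀ x, ‖F x‖ ≤ C := by
    intro x
    rw [hFeq]
    apply hC
    apply mem_image_of_mem
    have h2 := (equivIco T 0 x).2
    exact ⟨h2.1, by have := h2.2; linarith⟩
  have hmem : MemLp F 2 (@haarAddCircle T _) :=
    MemLp.of_bound hFmeas.aestronglyMeasurable C (Filter.Eventually.of_forall hbd)
  set FL : Lp ℂ 2 (@haarAddCircle T _) := hmem.toLp F with hFL
  have hcoeff : ∀ n : ℤ, fourierCoeff (FL : AddCircle T → ℂ) n = fourierCoeffOn Real.pi_pos f n := by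
    intro n
    have h1 : fourierCoeff (FL : AddCircle T → ℂ) n = fourierCoeff F n := by
      simp only [fourierCoeff]
      apply MeasureTheory.integral_congr_ae
      filter_upwards [hmem.coeFn_toLp] with t ht
      rw [ht]
    rw [h1, hF, fourierCoeff_liftIco_eq]
    exact fourierCoeffOn_congr (zero_add T) _ _ f n
  -- summability
  have hsum : Summable fun n : ℤ => ‖fourierCoeff (FL : AddCircle T → ℂ) n‖ ^ 2 := by
    have h1 : Memℓp (fun n : ℤ => (fourierBasis.repr FL) n) 2 := lp.memℓp _
    have h2 := (memℓp_gen_iff (by norm_num : (0:ℝ) < (2 : ENNReal).toReal)).mp h1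
    simp only [ENNReal.toReal_ofNat] at h2
    have h3 : Summable fun n : ℤ => ‖(fourierBasis.repr FL) n‖ ^ (2:ℕ) := by
      convert h2 using 2 with n
      rw [← Real.rpow_natCast]; norm_num
    simpa only [fourierBasis_repr] using h3
  have hts := tsum_sq_fourierCoeff FL
  -- integral identification
  have hint : ∫ t : AddCircle T, ‖FL t‖ ^ 2 ∂haarAddCircle
      = (1 / T) * ∫ x in (0:ℝ)..T, ‖f x‖ ^ 2 := by
    have hae : ∫ t : AddCircle T, ‖FL t‖ ^ 2 ∂haarAddCircle
        = ∫ t : AddCircle T, ‖F t‖ ^ 2 ∂haarAddCircle := by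
      apply MeasureTheory.integral_congr_ae
      filter_upwards [hmem.coeFn_toLp] with t ht
      rw [ht]
    rw [hae]
    have hvol : ∫ t : AddCircle T, ‖F t‖ ^ 2 ∂haarAddCircle
        = (1 / T) * ∫ t : AddCircle T, ‖F t‖ ^ 2 := by
      rw [volume_eq_smul_haarAddCircle, MeasureTheory.integral_smul_measure,
        ENNReal.toReal_ofReal Real.pi_pos.le, smul_eq_mul, ← mul_assoc,
        one_div, inv_mul_cancel₀ Real.pi_pos.ne', one_mul]
    rw [hvol]
    congr 1
    rw [← AddCircle.integral_preimage T 0 (fun t => ‖F t‖ ^ 2)]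
    rw [intervalIntegral.integral_of_le Real.pi_pos.le]
    rw [zero_add, MeasureTheory.integral_Ioc_eq_integral_Ioo,
      MeasureTheory.integral_Ioc_eq_integral_Ioo]
    apply setIntegral_congr_fun measurableSet_Ioo
    intro x hx
    show ‖F ((x : ℝ) : AddCircle T)‖ ^ 2 = ‖f x‖ ^ 2
    rw [hF, AddCircle.liftIco_coe_apply (⟨hx.1.le, by rw [zero_add]; exact hx.2⟩ :
      x ∈ Ico (0:ℝ) (0 + T))]
  rw [hint] at hts
  have := hsum.hasSum
  rw [hts] at this
  simp only [hcoeff] at this hsum ⊢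
  exact this

lemma coeff_deriv_pi (f f' : ℝ → ℂ) (hderiv : ∀ y, HasDerivAt f (f' y) y)
    (hf'c : Continuous f') (hper : f 0 = f Real.pi) {n : ℤ} (hn : n ≠ 0) :
    fourierCoeffOn Real.pi_pos f' n = 2 * Complex.I * n * fourierCoeffOn Real.pi_pos f n := by
  have key := fourierCoeffOn_of_hasDerivAt Real.pi_pos hn
    (fun x _ => hderiv x) (hf'c.intervalIntegrable 0 Real.pi)
  rw [show f Real.pi - f 0 = 0 by rw [hper, sub_self], mul_zero, zero_sub] at key
  have hπ : (Real.pi : ℂ) ≠ 0 := by exact_mod_cast Real.pi_ne_zero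
  have hnC : (n : ℂ) ≠ 0 := Int.cast_ne_zero.mpr hn
  have hI := Complex.I_ne_zero
  field_simp at key
  apply mul_left_cancel₀ hπ
  push_cast at key
  linear_combination -key

lemma wirtinger_pi (g g' : ℝ → ℝ) (hg : ∀ y, HasDerivAt g (g' y) y)
    (hc : Continuous g') (hper : g 0 = g Real.pi)
    (hmean : ∫ y in (0:ℝ)..Real.pi, g y = 0) :
    4 * ∫ y in (0:ℝ)..Real.pi, (g y) ^ 2 ≤ ∫ y in (0:ℝ)..Real.pi, (g' y) ^ 2 := by
  have hgc : Continuous g := by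
    rw [continuous_iff_continuousAt]; exact fun y => (hg y).continuousAt
  set G : ℝ → ℂ := fun y => ((g y : ℝ) : ℂ) with hG
  set G' : ℝ → ℂ := fun y => ((g' y : ℝ) : ℂ) with hG'
  have hGd : ∀ y, HasDerivAt G (G' y) y := fun y => (hg y).ofReal_comp
  have hGc : Continuous G := Complex.continuous_ofReal.comp hgc
  have hG'c : Continuous G' := Complex.continuous_ofReal.comp hc
  have hGper : G 0 = G Real.pi := by simp [hG, hper]
  have hnorm : ∀ (u : ℝ → ℝ) (x : ℝ), ‖((u x : ℝ) : ℂ)‖ ^ 2 = (u x) ^ 2 := by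
    intro u x; rw [Complex.norm_real, Real.norm_eq_abs, sq_abs]
  have h1 : HasSum (fun n : ℤ => ‖fourierCoeffOn Real.pi_pos G n‖ ^ 2)
      ((1 / Real.pi) * ∫ x in (0:ℝ)..Real.pi, (g x) ^ 2) := by
    have := parseval_pi G hGc
    simpa only [hG, hnorm g] using this
  have h2 : HasSum (fun n : ℤ => ‖fourierCoeffOn Real.pi_pos G' n‖ ^ 2)
      ((1 / Real.pi) * ∫ x in (0:ℝ)..Real.pi, (g' x) ^ 2) := by
    have := parseval_pi G' hG'c
    simpa only [hG', hnorm g'] using this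
  have hc0 : fourierCoeffOn Real.pi_pos G 0 = 0 := by
    rw [fourierCoeffOn_eq_integral]
    simp only [neg_zero, fourier_zero, one_smul]
    rw [intervalIntegral.integral_ofReal]
    rw [hmean]
    simp
  have hterm : ∀ n : ℤ, 4 * ‖fourierCoeffOn Real.pi_pos G n‖ ^ 2
      ≤ ‖fourierCoeffOn Real.pi_pos G' n‖ ^ 2 := by
    intro n
    by_cases hn : n = 0
    · subst hn
      rw [hc0]
      simp only [norm_zero]
      nlinarith [sq_nonneg ‖fourierCoeffOn Real.pi_pos G' 0‖]
    · rw [coeff_deriv_pi G G' hGd hG'c hGper hn]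
      have hnrm : ‖2 * Complex.I * (n : ℂ) * fourierCoeffOn Real.pi_pos G n‖
          = 2 * |(n : ℝ)| * ‖fourierCoeffOn Real.pi_pos G n‖ := by
        rw [norm_mul, norm_mul, norm_mul]
        simp [Complex.norm_intCast]
      rw [hnrm]
      have hn1 : (1 : ℝ) ≤ |(n : ℝ)| := by
        rw [← Int.cast_abs]
        exact_mod_cast Int.one_le_abs hn
      have hsq : (1:ℝ) * 1 ≤ |(n:ℝ)| * |(n:ℝ)| :=
        mul_le_mul hn1 hn1 (by norm_num) (abs_nonneg _)
      nlinarith [sq_nonneg ‖fourierCoeffOn Real.pi_pos G n‖,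
        norm_nonneg (fourierCoeffOn Real.pi_pos G n)]
  have hle := Summable.tsum_le_tsum hterm ((h1.summable).mul_left 4) h2.summable
  rw [(h1.mul_left 4).tsum_eq, h2.tsum_eq] at hle
  have hπ := Real.pi_pos
  calc 4 * ∫ y in (0:ℝ)..Real.pi, (g y) ^ 2
      = Real.pi * (4 * ((1 / Real.pi) * ∫ y in (0:ℝ)..Real.pi, (g y) ^ 2)) := by
        field_simp
    _ ≤ Real.pi * ((1 / Real.pi) * ∫ y in (0:ℝ)..Real.pi, (g' y) ^ 2) := by
        exact mul_le_mul_of_nonneg_left hle hπ.le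
    _ = ∫ y in (0:ℝ)..Real.pi, (g' y) ^ 2 := by field_simp

lemma int_lin (u q : ℝ → ℝ) (hu : Continuous u) (hq : Continuous q) (α β : ℝ) :
    ∫ y in (0:ℝ)..Real.pi, (α * u y ^ 2 + β * u y + q y)
      = α * (∫ y in (0:ℝ)..Real.pi, u y ^ 2) + β * (∫ y in (0:ℝ)..Real.pi, u y)
        + ∫ y in (0:ℝ)..Real.pi, q y := by
  rw [intervalIntegral.integral_add (f := fun y => α * u y ^ 2 + β * u y) (g := q) (((continuous_const.mul (hu.pow 2)).intervalIntegrable 0 Real.pi).add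
        ((continuous_const.mul hu).intervalIntegrable 0 Real.pi)) (hq.intervalIntegrable 0 Real.pi),
      intervalIntegral.integral_add (f := fun y => α * u y ^ 2) (g := fun y => β * u y) ((continuous_const.mul (hu.pow 2)).intervalIntegrable 0 Real.pi)
        ((continuous_const.mul hu).intervalIntegrable 0 Real.pi),
      intervalIntegral.integral_const_mul, intervalIntegral.integral_const_mul]

/-- Lower bound for the enstrophy of the zeroth zonal Fourier mode. -/
theorem zeroth_mode_inequality (f f' : ℝ → ℝ)
    (hderiv : ∀ y, HasDerivAt f (f' y) y)
    (hf'cont : Continuous f') :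
    ∫ y in (0:ℝ)..Real.pi, (f' y) ^ 2
      ≥ 2 * (∫ y in (0:ℝ)..Real.pi, (f y) ^ 2)
        - (1 / Real.pi ^ 3) * (2 * Real.pi * ∫ y in (0:ℝ)..Real.pi, f y) ^ 2
        - ((Real.pi ^ 2 - 3) / (12 * Real.pi ^ 3)) *
            (2 * Real.pi * (f 0 - f Real.pi)) ^ 2 := by
  have hπ := Real.pi_pos
  have hπ' := Real.pi_ne_zero
  have hfc : Continuous f := continuous_iff_continuousAt.mpr fun y => (hderiv y).continuousAt
  set I := ∫ y in (0:ℝ)..Real.pi, f y with hI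
  set M : ℝ := I / Real.pi with hM
  set Δ : ℝ := f 0 - f Real.pi with hΔ
  set g : ℝ → ℝ := fun y => f y - M + Δ * (y / Real.pi - 1/2) with hg
  set gd : ℝ → ℝ := fun y => f' y + Δ / Real.pi with hgd
  have hwc : Continuous fun y : ℝ => Δ * (y / Real.pi - 1/2) :=
    continuous_const.mul ((continuous_id.div_const Real.pi).sub continuous_const)
  have hw2c : Continuous fun y : ℝ => 4*Δ^2*(y/Real.pi - 1/2)^2 :=
    continuous_const.mul (((continuous_id.div_const Real.pi).sub continuous_const).pow 2)
  -- derivative of g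
  have hgderiv : ∀ y, HasDerivAt g (gd y) y := by
    intro y
    have h1 : HasDerivAt (fun y : ℝ => f y - M + Δ * (y / Real.pi - 1/2))
        (f' y + Δ * (1 / Real.pi)) y := by
      exact ((hderiv y).sub_const M).add
        ((((hasDerivAt_id y).div_const Real.pi).sub_const (1/2)).const_mul Δ)
    convert h1 using 1
    simp only [hgd]; ring
  have hgdc : Continuous gd := by
    simp only [hgd]; exact hf'cont.add continuous_const
  -- periodicity
  have hper : g 0 = g Real.pi := by
    simp only [hg]
    field_simp
    ring
  -- mean zero
  have hmean : ∫ y in (0:ℝ)..Real.pi, g y = 0 := by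
    have hsplit : ∫ y in (0:ℝ)..Real.pi, g y
        = (∫ y in (0:ℝ)..Real.pi, f y)
          + ∫ y in (0:ℝ)..Real.pi, (Δ * (y / Real.pi - 1/2) - M) := by
      rw [← intervalIntegral.integral_add (f := f) (g := fun y => Δ * (y / Real.pi - 1/2) - M) (hfc.intervalIntegrable 0 Real.pi)
        ((hwc.sub continuous_const).intervalIntegrable 0 Real.pi)]
      apply intervalIntegral.integral_congr
      intro y _
      simp only [hg]; ring
    have hA : ∫ y in (0:ℝ)..Real.pi, (Δ * (y / Real.pi - 1/2) - M) = -I := by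
      have hAder : ∀ y ∈ Set.uIcc (0:ℝ) Real.pi,
          HasDerivAt (fun y : ℝ => Δ * (Real.pi/2) * (y / Real.pi - 1/2)^2 - M * y)
            (Δ * (y / Real.pi - 1/2) - M) y := by
        intro y _
        have h1 : HasDerivAt (fun y : ℝ => Δ * (Real.pi/2) * (y / Real.pi - 1/2)^2 - M * y)
            (Δ * (Real.pi/2) * ((2:ℕ) * (y / Real.pi - 1/2)^1 * (1/Real.pi)) - M * 1) y := by
          exact ((((hasDerivAt_id y).div_const Real.pi).sub_const
            (1/2)).pow 2 |>.const_mul (Δ * (Real.pi/2))).sub ((hasDerivAt_id y).const_mul M)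
        convert h1 using 1
        field_simp
        ring
      rw [intervalIntegral.integral_eq_sub_of_hasDerivAt hAder
        ((hwc.sub continuous_const).intervalIntegrable 0 Real.pi)]
      rw [hM]
      field_simp
      ring
    rw [hsplit, hA, ← hI, add_neg_cancel]
  -- Wirtinger
  have hwirt := wirtinger_pi g gd hgderiv hgdc hper hmean
  -- compute ∫ gd²
  have hintf' : ∫ y in (0:ℝ)..Real.pi, f' y = -Δ := by
    rw [intervalIntegral.integral_eq_sub_of_hasDerivAt (fun y _ => hderiv y)
      (hf'cont.intervalIntegrable 0 Real.pi)]
    simp only [hΔ]; ring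
  have hgd2 : ∫ y in (0:ℝ)..Real.pi, (gd y) ^ 2
      = (∫ y in (0:ℝ)..Real.pi, (f' y) ^ 2) - Δ^2 / Real.pi := by
    have h1 : ∫ y in (0:ℝ)..Real.pi, (gd y) ^ 2
        = ∫ y in (0:ℝ)..Real.pi,
            (1 * f' y ^ 2 + (2 * Δ / Real.pi) * f' y + Δ^2 / Real.pi^2) := by
      apply intervalIntegral.integral_congr
      intro y _
      simp only [hgd]
      field_simp
      ring
    rw [h1, int_lin f' (fun _ => Δ^2 / Real.pi^2) hf'cont continuous_const, hintf',
      intervalIntegral.integral_const]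
    field_simp
    linear_combination Δ^2 * mul_inv_cancel₀ (pow_ne_zero 2 hπ')
  -- pointwise lower bound for 4 g²
  have hpt : ∀ y ∈ Set.Icc (0:ℝ) Real.pi,
      2 * f y ^ 2 + (-(4*M)) * f y + (2*M^2 - 4*Δ^2*(y/Real.pi - 1/2)^2) ≤ 4 * (g y)^2 := by
    intro y _
    simp only [hg]
    nlinarith [sq_nonneg (f y - M + 2*Δ*(y/Real.pi - 1/2))]
  have hq : ∫ y in (0:ℝ)..Real.pi, (2*M^2 - 4*Δ^2*(y/Real.pi - 1/2)^2)
      = 2*M^2*Real.pi - Δ^2*Real.pi/3 := by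
    have hQder : ∀ y ∈ Set.uIcc (0:ℝ) Real.pi,
        HasDerivAt (fun y : ℝ => 2*M^2*y - (4*Δ^2*Real.pi/3) * (y/Real.pi - 1/2)^3)
          (2*M^2 - 4*Δ^2*(y/Real.pi - 1/2)^2) y := by
      intro y _
      have h1 : HasDerivAt (fun y : ℝ => 2*M^2*y - (4*Δ^2*Real.pi/3) * (y/Real.pi - 1/2)^3)
          (2*M^2*1 - (4*Δ^2*Real.pi/3) * ((3:ℕ) * (y/Real.pi - 1/2)^2 * (1/Real.pi))) y := by
        exact ((hasDerivAt_id y).const_mul (2*M^2)).sub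
          ((((hasDerivAt_id y).div_const Real.pi).sub_const (1/2)).pow 3
            |>.const_mul (4*Δ^2*Real.pi/3))
      convert h1 using 1
      field_simp
      ring
    rw [intervalIntegral.integral_eq_sub_of_hasDerivAt hQder
      ((continuous_const.sub hw2c).intervalIntegrable 0 Real.pi)]
    field_simp
    ring
  have hmono : ∫ y in (0:ℝ)..Real.pi,
      (2 * f y ^ 2 + (-(4*M)) * f y + (2*M^2 - 4*Δ^2*(y/Real.pi - 1/2)^2))
      ≤ ∫ y in (0:ℝ)..Real.pi, 4 * (g y)^2 := by
    apply intervalIntegral.integral_mono_on hπ.le _ _ hpt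
    · exact (((continuous_const.mul (hfc.pow 2)).add (continuous_const.mul hfc)).add
        (continuous_const.sub hw2c)).intervalIntegrable 0 Real.pi
    · have hgc : Continuous g := by
        simp only [hg]
        exact (hfc.sub continuous_const).add hwc
      exact (continuous_const.mul (hgc.pow 2)).intervalIntegrable 0 Real.pi
  rw [int_lin f _ hfc (by fun_prop) 2 (-(4*M)), hq] at hmono
  rw [intervalIntegral.integral_const_mul] at hmono
  -- assemble
  rw [hgd2] at hwirt
  have hfinal : (∫ y in (0:ℝ)..Real.pi, (f' y) ^ 2) - Δ^2/Real.pi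
      ≥ ((2 * ∫ y in (0:ℝ)..Real.pi, f y ^ 2) + (-(4*M)) * I)
        + (2*M^2*Real.pi - Δ^2*Real.pi/3) :=
    le_trans hmono hwirt
  rw [hM] at hfinal
  have hid : ((2 * ∫ y in (0:ℝ)..Real.pi, f y ^ 2) + (-(4*(I/Real.pi))) * I)
        + (2*(I/Real.pi)^2*Real.pi - Δ^2*Real.pi/3) + Δ^2/Real.pi
      = (2 * (∫ y in (0:ℝ)..Real.pi, (f y) ^ 2)
          - (1 / Real.pi ^ 3) * (2 * Real.pi * I) ^ 2
          - ((Real.pi ^ 2 - 3) / (12 * Real.pi ^ 3)) * (2 * Real.pi * Δ) ^ 2)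
        + 2 * I^2 / Real.pi := by
    field_simp
    ring
  have hIsq : 2 * I^2 / Real.pi ≥ 0 := by positivity
  rw [ge_iff_le]
  linarith [hfinal, hid, hIsq]
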